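/- Let T be a d-minimal triangle with vertices p = (u/d, v/d), q = (w/d, x/d), r = (y/d, z/d), oriented counterclockwise with edges oriented p→q, q→r, r→p. If a, b, c are the weights of these three oriented edges, then a + b + c ≡ 1 (mod d). -/

import Mathlib

noncomputable section

/-- The lattice `(1/d)ℤ × (1/d)ℤ` inside `ℝ × ℝ`. -/
def Ld (d : ℕ) : Set (ℝ × ℝ) :=
  {p | ∃ a b : ℤ, p = ((a : ℝ) / d, (b : ℝ) / d)}

/-- A `d`-minimal triangle: vertices in `L_d`, not collinear, and the closed triangle
meets `L_d` exactly in its three vertices. -/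
def IsMinimalTriangle (d : ℕ) (p q r : ℝ × ℝ) : Prop :=
  p ∈ Ld d ∧ q ∈ Ld d ∧ r ∈ Ld d ∧
    ¬ Collinear ℝ ({p, q, r} : Set (ℝ × ℝ)) ∧
    convexHull ℝ ({p, q, r} : Set (ℝ × ℝ)) ∩ Ld d = {p, q, r}

/-- An element of `G = GL₂(ℤ) ⋉ ℤ²`: an integer matrix `[[a,b],[c,e]]` of determinant
`±1` together with an integer translation vector `(v1, v2)`. -/
structure GMap where
  a : ℤ
  b : ℤ
  c : ℤ
  e : ℤ
  v1 : ℤ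
  v2 : ℤ
  unimod : a * e - b * c = 1 ∨ a * e - b * c = -1

/-- The affine action `x ↦ Ux + v` of a `GMap` on `ℝ²`. -/
def GMap.app (g : GMap) (p : ℝ × ℝ) : ℝ × ℝ :=
  ((g.a : ℝ) * p.1 + (g.b : ℝ) * p.2 + (g.v1 : ℝ),
   (g.c : ℝ) * p.1 + (g.e : ℝ) * p.2 + (g.v2 : ℝ))

/-- A `d`-minimal segment: endpoints in `L_d`, distinct, and the closed segment meets
`L_d` exactly in its two endpoints. -/
def IsMinimalSegment (d : ℕ) (p q : ℝ × ℝ) : Prop :=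
  p ∈ Ld d ∧ q ∈ Ld d ∧ p ≠ q ∧ segment ℝ p q ∩ Ld d = {p, q}

/-- The point of `L_d` with integer numerator data `p : ℤ × ℤ`. -/
def pt (d : ℕ) (p : ℤ × ℤ) : ℝ × ℝ := ((p.1 : ℝ) / d, (p.2 : ℝ) / d)

/-- Counterclockwise orientation of the ordered triple of numerator data. -/
def ccwZ (p q r : ℤ × ℤ) : Prop :=
  0 < (q.1 - p.1) * (r.2 - p.2) - (q.2 - p.2) * (r.1 - p.1)

/-- Weight (mod `d`) of the oriented minimal segment from `(w/d, x/d)` to `(y/d, z/d)`,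
given by numerator data `(w,x)` and `(y,z)`. -/
def segWeight (d : ℕ) (p q : ℤ × ℤ) : ZMod d :=
  ((p.1 * q.2 - p.2 * q.1 : ℤ) : ZMod d)

/-- The multiset of weights of the three edges `p→q`, `q→r`, `r→p` of a triangle
given by numerator data. -/
def triWeight (d : ℕ) (p q r : ℤ × ℤ) : Multiset (ZMod d) :=
  {segWeight d p q, segWeight d q r, segWeight d r p}

lemma pt_injective (d : ℕ) (hd : 0 < d) {x y : ℤ × ℤ} (h : pt d x = pt d y) : x = y := by
  have hd' : (d : ℝ) ≠ 0 := by positivity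
  unfold pt at h
  rw [Prod.ext_iff] at h
  obtain ⟨h1, h2⟩ := h
  simp only [div_eq_div_iff hd' hd'] at h1 h2
  field_simp at h1 h2
  exact Prod.ext (by exact_mod_cast h1) (by exact_mod_cast h2)

lemma combo_mem_hull (p q r : ℝ × ℝ) (c1 c2 c3 : ℝ) (h1 : 0 ≤ c1) (h2 : 0 ≤ c2)
    (h3 : 0 ≤ c3) (hsum : c1 + c2 + c3 = 1) :
    c1 • p + c2 • q + c3 • r ∈ convexHull ℝ ({p, q, r} : Set (ℝ × ℝ)) := by
  have := Finset.centerMass_mem_convexHull (Finset.univ : Finset (Fin 3))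
    (w := ![c1, c2, c3]) (z := ![p, q, r]) ?_ ?_ ?_ (s := ({p, q, r} : Set (ℝ × ℝ)))
  · rwa [Finset.centerMass_eq_of_sum_1, Fin.sum_univ_three] at this
    rw [Fin.sum_univ_three]; simpa using hsum
  · intro i _; fin_cases i <;> simpa
  · rw [Fin.sum_univ_three]; simp only [Matrix.cons_val_zero, Matrix.cons_val_one,
      Matrix.head_cons, Matrix.cons_val_two, Matrix.tail_cons]
    linarith
  · intro i _; fin_cases i <;> simp

lemma key_mem (d : ℕ) (hd : 0 < d) (p q r : ℤ × ℤ)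
    (hmin : IsMinimalTriangle d (pt d p) (pt d q) (pt d r))
    (N : ℤ × ℤ) (c1 c2 c3 : ℝ) (h1 : 0 ≤ c1) (h2 : 0 ≤ c2) (h3 : 0 ≤ c3)
    (hsum : c1 + c2 + c3 = 1)
    (e1 : (N.1 : ℝ) = c1 * p.1 + c2 * q.1 + c3 * r.1)
    (e2 : (N.2 : ℝ) = c1 * p.2 + c2 * q.2 + c3 * r.2) :
    N = p ∨ N = q ∨ N = r := by
  have hd' : (d : ℝ) ≠ 0 := by positivity
  have hpt : pt d N = c1 • pt d p + c2 • pt d q + c3 • pt d r := by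
    unfold pt
    apply Prod.ext
    · simp only [Prod.fst_add, Prod.smul_fst, smul_eq_mul]
      rw [e1]; ring
    · simp only [Prod.snd_add, Prod.smul_snd, smul_eq_mul]
      rw [e2]; ring
  have hmem : pt d N ∈ convexHull ℝ ({pt d p, pt d q, pt d r} : Set (ℝ × ℝ)) ∩ Ld d := by
    constructor
    · rw [hpt]; exact combo_mem_hull _ _ _ _ _ _ h1 h2 h3 hsum
    · exact ⟨N.1, N.2, rfl⟩
  rw [hmin.2.2.2.2] at hmem
  rcases hmem with h | h | h
  · exact Or.inl (pt_injective d hd h)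
  · exact Or.inr (Or.inl (pt_injective d hd h))
  · exact Or.inr (Or.inr (pt_injective d hd h))

lemma det_eq_one (d : ℕ) (hd : 0 < d) (p q r : ℤ × ℤ)
    (hmin : IsMinimalTriangle d (pt d p) (pt d q) (pt d r))
    (hccw : ccwZ p q r) :
    (q.1 - p.1) * (r.2 - p.2) - (q.2 - p.2) * (r.1 - p.1) = 1 := by
  obtain ⟨a1, ha1⟩ : ∃ a1 : ℤ, a1 = q.1 - p.1 := ⟨_, rfl⟩
  obtain ⟨a2, ha2⟩ : ∃ a2 : ℤ, a2 = q.2 - p.2 := ⟨_, rfl⟩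
  obtain ⟨b1, hb1⟩ : ∃ b1 : ℤ, b1 = r.1 - p.1 := ⟨_, rfl⟩
  obtain ⟨b2, hb2⟩ : ∃ b2 : ℤ, b2 = r.2 - p.2 := ⟨_, rfl⟩
  obtain ⟨D, hDdef⟩ : ∃ D : ℤ, D = a1 * b2 - a2 * b1 := ⟨_, rfl⟩
  have hD : 0 < D := by
    rw [hDdef, ha1, ha2, hb1, hb2]; exact hccw
  rw [← ha1, ← ha2, ← hb1, ← hb2, ← hDdef]
  have hD' : (D : ℝ) ≠ 0 := by exact_mod_cast hD.ne'
  by_contra hne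
  have hD2 : 2 ≤ D := by omega
  -- cast helpers
  have hq1R : (q.1 : ℝ) = p.1 + a1 := by
    have := congrArg (Int.cast : ℤ → ℝ) ha1; push_cast at this; linarith
  have hq2R : (q.2 : ℝ) = p.2 + a2 := by
    have := congrArg (Int.cast : ℤ → ℝ) ha2; push_cast at this; linarith
  have hr1R : (r.1 : ℝ) = p.1 + b1 := by
    have := congrArg (Int.cast : ℤ → ℝ) hb1; push_cast at this; linarith
  have hr2R : (r.2 : ℝ) = p.2 + b2 := by
    have := congrArg (Int.cast : ℤ → ℝ) hb2; push_cast at this; linarith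
  -- Step 1: a1 and a2 are coprime
  have hcop : IsCoprime a1 a2 := by
    rw [Int.isCoprime_iff_gcd_eq_one]
    by_contra hg
    obtain ⟨g, hgdef⟩ : ∃ g : ℤ, g = (Int.gcd a1 a2 : ℤ) := ⟨_, rfl⟩
    have hdvd1 : g ∣ a1 := hgdef ▸ Int.gcd_dvd_left a1 a2
    have hdvd2 : g ∣ a2 := hgdef ▸ Int.gcd_dvd_right a1 a2
    obtain ⟨m, hm⟩ := hdvd1
    obtain ⟨n, hn⟩ := hdvd2
    have hg0 : g ≠ 0 := by
      intro h0
      rw [h0, zero_mul] at hm hn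
      rw [hm, hn] at hDdef
      simp at hDdef
      omega
    have hg2 : 2 ≤ g := by
      have h1 : g ≠ 1 := by rw [hgdef]; exact_mod_cast hg
      have : 0 ≤ g := hgdef ▸ Int.ofNat_nonneg _
      omega
    have hgR : (g : ℝ) ≠ 0 := by exact_mod_cast hg0
    have hg1R : (1:ℝ) ≤ g := by exact_mod_cast (by omega : (1:ℤ) ≤ g)
    have hmR : (a1 : ℝ) = g * m := by exact_mod_cast hm
    have hnR : (a2 : ℝ) = g * n := by exact_mod_cast hn
    have hN := key_mem d hd p q r hmin (p.1 + m, p.2 + n) (1 - 1/g) (1/g) 0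
      (by
        have : (1:ℝ)/g ≤ 1 := by rw [div_le_one (by linarith)]; linarith
        linarith)
      (by positivity) le_rfl (by ring)
      (by push_cast
          rw [hq1R, hmR]; field_simp; ring)
      (by push_cast
          rw [hq2R, hnR]; field_simp; ring)
    rcases hN with h | h | h
    · rw [Prod.ext_iff] at h
      simp only at h
      have hm0 : m = 0 := by omega
      have hn0 : n = 0 := by omega
      rw [hm0, mul_zero] at hm
      rw [hn0, mul_zero] at hn
      rw [hm, hn] at hDdef
      simp at hDdef
      omega
    · rw [Prod.ext_iff] at h
      simp only at h
      have hma : a1 = m := by omega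
      have hna : a2 = n := by omega
      have hm0 : m = 0 := by
        have h0 : (g - 1) * m = 0 := by linear_combination hma - hm
        rcases mul_eq_zero.mp h0 with h' | h'
        · omega
        · exact h'
      have hn0 : n = 0 := by
        have h0 : (g - 1) * n = 0 := by linear_combination hna - hn
        rcases mul_eq_zero.mp h0 with h' | h'
        · omega
        · exact h'
      have : D = 0 := by rw [hDdef, hma, hna, hm0, hn0]; ring
      omega
    · rw [Prod.ext_iff] at h
      simp only at h
      have hmb : b1 = m := by omega
      have hnb : b2 = n := by omega
      have : D = 0 := by rw [hDdef, hmb, hnb, hm, hn]; ring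
      omega
  -- Step 2: construct the extra interior point
  obtain ⟨u, v, huv⟩ := hcop
  obtain ⟨u0, hu0⟩ : ∃ u0 : ℤ, u0 = (-v) * b2 - u * b1 := ⟨_, rfl⟩
  obtain ⟨k, hk⟩ : ∃ k : ℤ, k = -(u0 / D) := ⟨_, rfl⟩
  obtain ⟨x, hxdef⟩ : ∃ x : ℤ, x = -v + k * a1 := ⟨_, rfl⟩
  obtain ⟨y, hydef⟩ : ∃ y : ℤ, y = u + k * a2 := ⟨_, rfl⟩
  have hv : a1 * y - a2 * x = 1 := by
    rw [hxdef, hydef]; linear_combination huv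
  obtain ⟨uu, huu⟩ : ∃ uu : ℤ, uu = x * b2 - y * b1 := ⟨_, rfl⟩
  have huumod : uu = u0 % D := by
    rw [huu, hxdef, hydef, Int.emod_def, hk]
    linear_combination -hu0 + (u0 / D) * hDdef
  have huu0 : 0 ≤ uu := huumod ▸ Int.emod_nonneg _ hD.ne'
  have huuD : uu < D := huumod ▸ Int.emod_lt_of_pos _ hD
  have hxD : D * x = uu * a1 + b1 := by
    rw [hDdef, huu]; linear_combination b1 * hv
  have hyD : D * y = uu * a2 + b2 := by
    rw [hDdef, huu]; linear_combination b2 * hv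
  have hxR : (D : ℝ) * x = uu * a1 + b1 := by exact_mod_cast hxD
  have hyR : (D : ℝ) * y = uu * a2 + b2 := by exact_mod_cast hyD
  have huu0R : (0:ℝ) ≤ uu := by exact_mod_cast huu0
  have huuDR : (uu:ℝ) ≤ D - 1 := by exact_mod_cast (by omega : uu ≤ D - 1)
  have hDR : (0:ℝ) < D := by exact_mod_cast hD
  have hN := key_mem d hd p q r hmin (p.1 + x, p.2 + y)
    ((D - uu - 1) / D) (uu / D) (1 / D)
    (by apply div_nonneg <;> linarith)
    (by apply div_nonneg <;> linarith)
    (by positivity)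
    (by field_simp; ring)
    (by push_cast
        rw [hq1R, hr1R]
        field_simp
        linear_combination hxR)
    (by push_cast
        rw [hq2R, hr2R]
        field_simp
        linear_combination hyR)
  rcases hN with h | h | h
  · rw [Prod.ext_iff] at h
    simp only at h
    have hx1 : x = 0 := by omega
    have hy1 : y = 0 := by omega
    rw [hx1, hy1] at hv
    simp at hv
  · rw [Prod.ext_iff] at h
    simp only at h
    have hx1 : x = a1 := by omega
    have hy1 : y = a2 := by omega
    rw [hx1, hy1] at hv
    have : (0:ℤ) = 1 := by linear_combination hv
    omega
  · rw [Prod.ext_iff] at h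
    simp only at h
    have hx1 : x = b1 := by omega
    have hy1 : y = b2 := by omega
    rw [hx1, hy1] at hv
    rw [← hDdef] at hv
    omega

/-- the three counterclockwise edge weights of a `d`-minimal triangle
sum to `1` mod `d`. -/
theorem triangle_weights_sum_to_one (d : ℕ) (hd : 0 < d) (p q r : ℤ × ℤ)
    (hmin : IsMinimalTriangle d (pt d p) (pt d q) (pt d r))
    (hccw : ccwZ p q r) :
    segWeight d p q + segWeight d q r + segWeight d r p = 1 := by
  have hdet := det_eq_one d hd p q r hmin hccw
  have hsum : (p.1 * q.2 - p.2 * q.1) + (q.1 * r.2 - q.2 * r.1) + (r.1 * p.2 - r.2 * p.1)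
      = (q.1 - p.1) * (r.2 - p.2) - (q.2 - p.2) * (r.1 - p.1) := by ring
  unfold segWeight
  rw [← Int.cast_add, ← Int.cast_add, hsum, hdet]
  exact Int.cast_one
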